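/- (An LLRF yields an LRF-based disjunctive transition invariant) Suppose T ⊆ ℚⁿ × ℚⁿ admits an LLRF ⟨ρ₁, …, ρ_d⟩: for every (x, x') ∈ T there exists i with ρⱼ(x) − ρⱼ(x') ≥ 0 for j < i, ρᵢ(x) − ρᵢ(x') ≥ 1, and ρᵢ(x) ≥ 0. Then T⁺ ⊆ T_{ρ₁} ∪ ⋯ ∪ T_{ρ_d}, where T_{ρ} = { (x, x') : ρ(x) ≥ 0 and ρ(x) − ρ(x') ≥ 1 }. -/

import Mathlib

theorem stmt_19 (n d : ℕ)
    (T : Set ((Fin n → ℚ) × (Fin n → ℚ)))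
    (L : Fin d → Fin n → ℚ) (c : Fin d → ℚ)
    (ρ : Fin d → (Fin n → ℚ) → ℚ)
    (hρ : ∀ i x, ρ i x = (∑ j, L i j * x j) + c i)
    (h : ∀ p ∈ T, ∃ i : Fin d,
      (∀ j < i, 0 ≤ ρ j p.1 - ρ j p.2) ∧ 1 ≤ ρ i p.1 - ρ i p.2 ∧ 0 ≤ ρ i p.1) :
    ∀ x x', Relation.TransGen (fun a b => (a, b) ∈ T) x x' →
      ∃ i : Fin d, 0 ≤ ρ i x ∧ 1 ≤ ρ i x - ρ i x' := by
  have key : ∀ x x', Relation.TransGen (fun a b => (a, b) ∈ T) x x' →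
      ∃ i : Fin d, (∀ j < i, 0 ≤ ρ j x - ρ j x') ∧ 1 ≤ ρ i x - ρ i x' ∧ 0 ≤ ρ i x := by
    intro x x' htc
    induction htc using Relation.TransGen.head_induction_on with
    | single hab => exact h _ hab
    | head hab _ IH =>
      rename_i a b hbc
      obtain ⟨i, hi1, hi2, hi3⟩ := IH
      obtain ⟨i', hi'1, hi'2, hi'3⟩ := h _ hab
      rcases lt_or_ge i' i with hlt | hle
      · refine ⟨i', fun j hj => ?_, ?_, hi'3⟩
        · have := hi'1 j hj
          have := hi1 j (hj.trans hlt)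
          linarith
        · have := hi1 i' hlt
          linarith
      · refine ⟨i, fun j hj => ?_, ?_, ?_⟩
        · have := hi1 j hj
          have := hi'1 j (lt_of_lt_of_le hj hle)
          linarith
        · rcases eq_or_lt_of_le hle with heq | hlt
          · subst heq; linarith
          · have := hi'1 i hlt
            linarith
        · have : 0 ≤ ρ i a - ρ i b := by
            rcases eq_or_lt_of_le hle with heq | hlt
            · subst heq; linarith
            · exact hi'1 i hlt
          linarith
  intro x x' htc
  obtain ⟨i, _, h2, h3⟩ := key x x' htc
  exact ⟨i, h3, h2⟩
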